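/- Let T be a density operator on C^d and C_T(j,k) = (1/d) U_j V_k T V_k* U_j*. Then the marginals of C_T are Σ_{k} C_T(j,k) = Σ_{i} Λ(j−i) A(i) and Σ_{j} C_T(j,k) = Σ_{i} Γ(k−i) B(i), where Λ(j) = tr[A(−j) T], Γ(k) = tr[B(−k) T], A(i) = |φ_i⟩⟨φ_i|, and B(i) = |ψ_i⟩⟨ψ_i| with ψ_i = F* φ_i. -/

import Mathlib

open Matrix Kronecker Finset
open scoped ComplexOrder

/-- ω = e^{2πi/d} -/
noncomputable def ww (d : ℕ) : ℂ := Complex.exp (2 * Real.pi * Complex.I / d)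

/-- shift unitary U_x φ_k = φ_{k+x} -/
noncomputable def Um (d : ℕ) (x : ZMod d) : Matrix (ZMod d) (ZMod d) ℂ :=
  fun i j => if i = j + x then 1 else 0

/-- modulation unitary V_y φ_k = ω^{yk} φ_k -/
noncomputable def Vm (d : ℕ) (y : ZMod d) : Matrix (ZMod d) (ZMod d) ℂ :=
  Matrix.diagonal fun i => ww d ^ (y * i).val

/-- finite Fourier transform F φ_k = (1/√d) Σ_h ω^{-hk} φ_h -/
noncomputable def Fm (d : ℕ) : Matrix (ZMod d) (ZMod d) ℂ :=
  fun i j => (1 / Real.sqrt d : ℂ) * (ww d)⁻¹ ^ (i * j).val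

/-- the standard orthonormal basis vector φ_k -/
noncomputable def phiV (d : ℕ) (k : ZMod d) : ZMod d → ℂ := Pi.single k 1

/-- ψ_k = F* φ_k -/
noncomputable def psiV (d : ℕ) [NeZero d] (k : ZMod d) : ZMod d → ℂ :=
  (Fm d)ᴴ.mulVec (phiV d k)

/-- A(j) = |φ_j⟩⟨φ_j| -/
noncomputable def Aob (d : ℕ) (j : ZMod d) : Matrix (ZMod d) (ZMod d) ℂ :=
  vecMulVec (phiV d j) (star (phiV d j))

/-- B(k) = |ψ_k⟩⟨ψ_k| -/
noncomputable def Bob (d : ℕ) [NeZero d] (k : ZMod d) : Matrix (ZMod d) (ZMod d) ℂ :=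
  vecMulVec (psiV d k) (star (psiV d k))

noncomputable def ee (d : ℕ) (x : ZMod d) : ℂ := ww d ^ x.val

lemma ww_prim (d : ℕ) [NeZero d] : IsPrimitiveRoot (ww d) d :=
  Complex.isPrimitiveRoot_exp d (NeZero.ne d)

lemma ww_pow_d (d : ℕ) [NeZero d] : ww d ^ d = 1 := (ww_prim d).pow_eq_one

lemma ww_ne_zero (d : ℕ) : ww d ≠ 0 := Complex.exp_ne_zero _

lemma ee_natCast (d : ℕ) [NeZero d] (n : ℕ) : ee d (n : ZMod d) = ww d ^ n := by
  rw [ee, ZMod.val_natCast, ← pow_eq_pow_mod _ (ww_pow_d d)]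

lemma ee_zero (d : ℕ) [NeZero d] : ee d 0 = 1 := by simp [ee]

lemma ee_add (d : ℕ) [NeZero d] (x y : ZMod d) : ee d (x + y) = ee d x * ee d y := by
  have := ee_natCast d (x.val + y.val)
  simp only [Nat.cast_add, ZMod.natCast_val, ZMod.cast_id] at this
  rw [this, pow_add, ee, ee]

lemma ee_ne_zero (d : ℕ) (x : ZMod d) : ee d x ≠ 0 := pow_ne_zero _ (ww_ne_zero d)

lemma ee_neg (d : ℕ) [NeZero d] (x : ZMod d) : ee d (-x) = (ee d x)⁻¹ := by
  have h : ee d x * ee d (-x) = 1 := by rw [← ee_add]; simp [ee_zero]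
  exact eq_inv_of_mul_eq_one_left (by rw [mul_comm] at h; exact h)

lemma star_ee (d : ℕ) [NeZero d] (x : ZMod d) : star (ee d x) = ee d (-x) := by
  have habs : ‖ee d x‖ = 1 := by
    rw [ee, norm_pow, (ww_prim d).norm'_eq_one (NeZero.ne d), one_pow]
  have h1 : star (ee d x) * ee d x = 1 := by
    rw [Complex.star_def, mul_comm, Complex.mul_conj, Complex.normSq_eq_norm_sq, habs]
    norm_num
  rw [ee_neg]
  exact eq_inv_of_mul_eq_one_left h1

lemma sum_ee (d : ℕ) [NeZero d] (n : ZMod d) :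
    ∑ k : ZMod d, ee d (k * n) = if n = 0 then (d : ℂ) else 0 := by
  have hform : ∀ k : ZMod d, ee d (k * n) = (ee d n) ^ k.val := by
    intro k
    have : ((k.val * n.val : ℕ) : ZMod d) = k * n := by
      push_cast; simp [ZMod.natCast_val, ZMod.cast_id]
    rw [← this, ee_natCast, mul_comm, pow_mul, ← ee_natCast, ZMod.natCast_val, ZMod.cast_id]
  simp only [hform]
  obtain ⟨m, rfl⟩ : ∃ m, d = m + 1 := ⟨d - 1, (Nat.succ_pred_eq_of_pos (NeZero.pos d)).symm⟩
  have hrange : ∑ k : ZMod (m+1), ee (m+1) n ^ k.val = ∑ i ∈ range (m+1), ee (m+1) n ^ i :=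
    Fin.sum_univ_eq_sum_range _ _
  rw [hrange]
  by_cases hn : n = 0
  · simp [hn, ee_zero]
  · rw [if_neg hn]
    have hz1 : ee (m+1) n ≠ 1 := by
      intro h
      have := (ww_prim (m+1)).pow_eq_one_iff_dvd n.val |>.mp h
      have h0 : n.val = 0 := Nat.eq_zero_of_dvd_of_lt this (ZMod.val_lt n)
      exact hn ((ZMod.val_eq_zero n).mp h0)
    have hzd : ee (m+1) n ^ (m+1) = 1 := by
      rw [ee, ← pow_mul, mul_comm, pow_mul, ww_pow_d, one_pow]
    rw [geom_sum_eq hz1, hzd, sub_self, zero_div]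

lemma Vm_eq (d : ℕ) (y : ZMod d) : Vm d y = Matrix.diagonal fun i => ee d (y * i) := rfl

lemma Um_mul_apply (d : ℕ) [NeZero d] (x : ZMod d) (M : Matrix (ZMod d) (ZMod d) ℂ) (a b : ZMod d) :
    (Um d x * M) a b = M (a - x) b := by
  simp only [Um, mul_apply, ite_mul, one_mul, zero_mul]
  have h : ∀ c : ZMod d, (a = c + x) = (a - x = c) := fun c =>
    propext ⟨fun hh => by rw [hh]; ring, fun hh => by rw [← hh]; ring⟩
  simp only [h]
  simp [Finset.sum_ite_eq]

lemma mul_UmH_apply (d : ℕ) [NeZero d] (x : ZMod d) (M : Matrix (ZMod d) (ZMod d) ℂ) (a b : ZMod d) :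
    (M * (Um d x)ᴴ) a b = M a (b - x) := by
  simp only [Um, mul_apply, conjTranspose_apply]
  have h : ∀ c : ZMod d, (b = c + x) = (b - x = c) := fun c =>
    propext ⟨fun hh => by rw [hh]; ring, fun hh => by rw [← hh]; ring⟩
  simp only [h, apply_ite (star : ℂ → ℂ), star_one, star_zero, mul_ite, mul_one, mul_zero]
  simp [Finset.sum_ite_eq]

lemma Vm_mul_apply (d : ℕ) [NeZero d] (y : ZMod d) (M : Matrix (ZMod d) (ZMod d) ℂ) (a b : ZMod d) :
    (Vm d y * M) a b = ee d (y * a) * M a b := by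
  rw [Vm_eq, Matrix.diagonal_mul]

lemma mul_VmH_apply (d : ℕ) [NeZero d] (y : ZMod d) (M : Matrix (ZMod d) (ZMod d) ℂ)
    (a b : ZMod d) : (M * (Vm d y)ᴴ) a b = M a b * ee d (-(y * b)) := by
  rw [Vm_eq, diagonal_conjTranspose, Matrix.mul_diagonal]
  simp [star_ee]

lemma conj_apply (d : ℕ) [NeZero d] (j k : ZMod d) (T : Matrix (ZMod d) (ZMod d) ℂ)
    (a b : ZMod d) :
    (Um d j * Vm d k * T * (Vm d k)ᴴ * (Um d j)ᴴ) a b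
      = ee d (k * (a - b)) * T (a - j) (b - j) := by
  rw [mul_UmH_apply, mul_VmH_apply, Matrix.mul_assoc (Um d j) (Vm d k) T,
    Um_mul_apply, Vm_mul_apply]
  rw [mul_comm (ee d (k * (a - j))) _, mul_assoc, ← ee_add]
  rw [mul_comm]
  congr 2
  ring

lemma Aob_apply (d : ℕ) (m a b : ZMod d) :
    Aob d m a b = if a = m ∧ b = m then 1 else 0 := by
  simp only [Aob, vecMulVec_apply, phiV, Pi.star_apply, Pi.single_apply,
    apply_ite (star : ℂ → ℂ), star_one, star_zero]
  by_cases h1 : a = m <;> by_cases h2 : b = m <;> simp [h1, h2]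

lemma trace_Aob (d : ℕ) [NeZero d] (m : ZMod d) (T : Matrix (ZMod d) (ZMod d) ℂ) :
    Matrix.trace (Aob d m * T) = T m m := by
  simp only [Matrix.trace, diag_apply, mul_apply, Aob_apply]
  rw [Finset.sum_comm]
  simp [ite_and, Finset.sum_ite_eq']

lemma star_ww (d : ℕ) : star (ww d) = (ww d)⁻¹ := by
  rw [ww, Complex.star_def, ← Complex.exp_conj, ← Complex.exp_neg]
  congr 1
  simp [Complex.ext_iff]
  ring

lemma psiV_apply (d : ℕ) [NeZero d] (m h : ZMod d) :
    psiV d m h = (1 / (Real.sqrt d : ℂ)) * ee d (m * h) := by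
  simp only [psiV, mulVec, dotProduct, conjTranspose_apply, phiV, Pi.single_apply, mul_ite,
    mul_one, mul_zero]
  rw [Finset.sum_ite_eq' Finset.univ m]
  simp only [Finset.mem_univ, if_true, Fm, star_mul', star_pow, star_inv₀, star_ww, inv_inv]
  have : star ((1 : ℂ) / (Real.sqrt d : ℂ)) = (1 : ℂ) / (Real.sqrt d : ℂ) := by
    simp [star_div₀, Complex.star_def, Complex.conj_ofReal]
  rw [this, ee]

lemma Bob_apply (d : ℕ) [NeZero d] (m a b : ZMod d) :
    Bob d m a b = (1 / (d : ℂ)) * ee d (m * (a - b)) := by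
  simp only [Bob, vecMulVec_apply, Pi.star_apply, psiV_apply, star_mul']
  have hs : star ((1 : ℂ) / (Real.sqrt d : ℂ)) = (1 : ℂ) / (Real.sqrt d : ℂ) := by
    simp [Complex.star_def, Complex.conj_ofReal]
  rw [hs, star_ee]
  have hd : ((1 : ℂ) / (Real.sqrt d : ℂ)) * ((1 : ℂ) / (Real.sqrt d : ℂ)) = 1 / (d : ℂ) := by
    rw [div_mul_div_comm, one_mul]
    congr 1
    rw [← Complex.ofReal_mul, Real.mul_self_sqrt (Nat.cast_nonneg d)]
    simp
  calc (1 / (Real.sqrt d : ℂ)) * ee d (m * a) * ((1 / (Real.sqrt d : ℂ)) * ee d (-(m * b)))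
      = ((1 / (Real.sqrt d : ℂ)) * (1 / (Real.sqrt d : ℂ))) * (ee d (m * a) * ee d (-(m * b))) := by
        ring
    _ = (1 / (d : ℂ)) * ee d (m * (a - b)) := by
        rw [hd, ← ee_add]; congr 2; ring

lemma trace_Bob (d : ℕ) [NeZero d] (m : ZMod d) (T : Matrix (ZMod d) (ZMod d) ℂ) :
    Matrix.trace (Bob d m * T)
      = (1 / (d : ℂ)) * ∑ p : ZMod d, ∑ q : ZMod d, ee d (m * (p - q)) * T q p := by
  simp only [Matrix.trace, diag_apply, mul_apply, Bob_apply]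
  rw [Finset.mul_sum]
  refine Finset.sum_congr rfl fun p _ => ?_
  rw [Finset.mul_sum]
  refine Finset.sum_congr rfl fun q _ => ?_
  ring

lemma part2entry (d : ℕ) [NeZero d] (T : Matrix (ZMod d) (ZMod d) ℂ) (k a b : ZMod d) :
    ∑ i : ZMod d, ((1/(d:ℂ)) * ∑ p : ZMod d, ∑ q : ZMod d, ee d ((i-k)*(p-q)) * T q p)
        * ((1/(d:ℂ)) * ee d (i*(a-b)))
      = ∑ j : ZMod d, (1/(d:ℂ)) * (ee d (k*(a-b)) * T (a-j) (b-j)) := by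
  have hdc : (d : ℂ) ≠ 0 := Nat.cast_ne_zero.mpr (NeZero.ne d)
  have key : ∀ p q : ZMod d, ∑ i : ZMod d, ee d ((i-k)*(p-q)) * ee d (i*(a-b))
      = ee d (-(k*(p-q))) * (if (p-q)+(a-b) = 0 then (d:ℂ) else 0) := by
    intro p q
    have h1 : ∀ i : ZMod d, ee d ((i-k)*(p-q)) * ee d (i*(a-b))
        = ee d (-(k*(p-q))) * ee d (i*((p-q)+(a-b))) := by
      intro i
      rw [← ee_add, ← ee_add]
      congr 1; ring
    simp only [h1]
    rw [← Finset.mul_sum, sum_ee]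
  calc ∑ i : ZMod d, ((1/(d:ℂ)) * ∑ p : ZMod d, ∑ q : ZMod d, ee d ((i-k)*(p-q)) * T q p)
        * ((1/(d:ℂ)) * ee d (i*(a-b)))
      = ∑ p : ZMod d, ∑ q : ZMod d, (1/(d:ℂ)) * (1/(d:ℂ)) * T q p *
          ∑ i : ZMod d, ee d ((i-k)*(p-q)) * ee d (i*(a-b)) := by
        simp only [Finset.mul_sum, Finset.sum_mul]
        rw [Finset.sum_comm]
        refine Finset.sum_congr rfl fun p _ => ?_
        rw [Finset.sum_comm]
        refine Finset.sum_congr rfl fun q _ => ?_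
        refine Finset.sum_congr rfl fun i _ => ?_
        ring
    _ = ∑ p : ZMod d, ∑ q : ZMod d, (1/(d:ℂ)) * (1/(d:ℂ)) * T q p *
          (ee d (-(k*(p-q))) * (if q = p+(a-b) then (d:ℂ) else 0)) := by
        refine Finset.sum_congr rfl fun p _ => Finset.sum_congr rfl fun q _ => ?_
        rw [key]
        have hc : (p - q + (a - b) = 0) ↔ (q = p + (a - b)) :=
          ⟨fun h => by linear_combination -h, fun h => by linear_combination -h⟩
        rw [if_congr hc rfl rfl]
    _ = ∑ p : ZMod d, (1/(d:ℂ)) * (1/(d:ℂ)) * T (p+(a-b)) p *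
          (ee d (-(k*(p-(p+(a-b))))) * (d:ℂ)) := by
        refine Finset.sum_congr rfl fun p _ => ?_
        simp only [mul_ite, mul_zero]
        rw [Finset.sum_ite_eq' Finset.univ (p+(a-b))]
        simp
    _ = ∑ p : ZMod d, (1/(d:ℂ)) * (ee d (k*(a-b)) * T (p+(a-b)) p) := by
        refine Finset.sum_congr rfl fun p _ => ?_
        have h2 : -(k*(p-(p+(a-b)))) = k*(a-b) := by ring
        rw [h2]
        field_simp
    _ = ∑ j : ZMod d, (1/(d:ℂ)) * (ee d (k*(a-b)) * T (a-j) (b-j)) := by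
        refine (Fintype.sum_equiv (Equiv.subLeft b) _ _ fun j => ?_).symm
        have h3 : b - j + (a - b) = a - j := by ring
        simp only [Equiv.subLeft_apply, h3]

theorem covariant_phase_space_observable_marginals (d : ℕ) (hd : 2 ≤ d) [NeZero d]
    (T : Matrix (ZMod d) (ZMod d) ℂ) (hT : T.PosSemidef) (htr : T.trace = 1) :
    (∀ j : ZMod d, ∑ k : ZMod d,
        (1 / d : ℂ) • (Um d j * Vm d k * T * (Vm d k)ᴴ * (Um d j)ᴴ) =
      ∑ i : ZMod d, Matrix.trace (Aob d (-(j - i)) * T) • Aob d i) ∧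
    (∀ k : ZMod d, ∑ j : ZMod d,
        (1 / d : ℂ) • (Um d j * Vm d k * T * (Vm d k)ᴴ * (Um d j)ᴴ) =
      ∑ i : ZMod d, Matrix.trace (Bob d (-(k - i)) * T) • Bob d i) := by
  have hdc : (d : ℂ) ≠ 0 := Nat.cast_ne_zero.mpr (NeZero.ne d)
  constructor
  · intro j
    ext a b
    simp only [Matrix.sum_apply, Matrix.smul_apply, smul_eq_mul, conj_apply, neg_sub,
      trace_Aob, Aob_apply, mul_ite, mul_one, mul_zero]
    have L : ∑ k : ZMod d, (1/(d:ℂ)) * (ee d (k*(a-b)) * T (a-j) (b-j))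
        = if a = b then T (a-j) (b-j) else 0 := by
      have : ∑ k : ZMod d, (1/(d:ℂ)) * (ee d (k*(a-b)) * T (a-j) (b-j))
          = (1/(d:ℂ)) * ((∑ k : ZMod d, ee d (k*(a-b))) * T (a-j) (b-j)) := by
        rw [Finset.sum_mul, Finset.mul_sum]
      rw [this, sum_ee]
      by_cases hab : a = b
      · simp only [hab, sub_self, if_pos rfl]
        simp only [if_true]
        field_simp
      · rw [if_neg (sub_ne_zero.mpr hab), if_neg hab]
        simp
    rw [L]
    by_cases hab : a = b
    · subst hab
      simp only [and_self, if_pos rfl]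
      rw [Finset.sum_ite_eq Finset.univ a]
      simp
    · rw [if_neg hab]
      refine (Finset.sum_eq_zero fun i _ => ?_).symm
      rw [if_neg]
      rintro ⟨h1, h2⟩
      exact hab (h1.trans h2.symm)
  · intro k
    ext a b
    simp only [Matrix.sum_apply, Matrix.smul_apply, smul_eq_mul, conj_apply, neg_sub,
      trace_Bob, Bob_apply]
    exact (part2entry d T k a b).symm
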